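/- One-step descent for biased, noisy gradient steps: if f is L-smooth, x⁺ = x − γ·g̃ where E[g̃] satisfies ⟨∇f(x), E[g̃]⟩ ≥ (1−b)‖∇f(x)‖² and E‖g̃‖² ≤ (M_V + (1+b)²)‖∇f(x)‖² + V for constants b ∈ [0,1), M_V, V ≥ 0, and 0 < γ ≤ (1−b)/(L(M_V + (1+b)²)), then E[f(x⁺)] ≤ f(x) − (γ(1−b)/2)‖∇f(x)‖² + (γ²L/2)V. -/
import Mathlib


open MeasureTheory RealInnerProductSpace

/-- One-step descent for biased, noisy gradient steps on an `L`-smooth function. -/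
theorem one_step_descent (d : ℕ) {Ω : Type*} [MeasureSpace Ω]
    [IsProbabilityMeasure (volume : Measure Ω)]
    (f : EuclideanSpace ℝ (Fin d) → ℝ)
    (gf : EuclideanSpace ℝ (Fin d) → EuclideanSpace ℝ (Fin d))
    (L b MV V γ : ℝ) (hL : 0 < L) (hb0 : 0 ≤ b) (hb1 : b < 1)
    (hMV : 0 ≤ MV) (hV : 0 ≤ V)
    (hgrad : ∀ x, HasGradientAt f (gf x) x)
    (hsmooth : ∀ x y, f y ≤ f x + ⟪gf x, y - x⟫ + L / 2 * ‖y - x‖ ^ 2)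
    (x : EuclideanSpace ℝ (Fin d)) (gtilde : Ω → EuclideanSpace ℝ (Fin d))
    (hint : Integrable gtilde)
    (hsq : Integrable (fun ω => ‖gtilde ω‖ ^ 2))
    (hfint : Integrable (fun ω => f (x - γ • gtilde ω)))
    (hfirst : (1 - b) * ‖gf x‖ ^ 2 ≤ ⟪gf x, ∫ ω, gtilde ω⟫)
    (hsecond : (∫ ω, ‖gtilde ω‖ ^ 2) ≤ (MV + (1 + b) ^ 2) * ‖gf x‖ ^ 2 + V)
    (hγ0 : 0 < γ) (hγ : γ ≤ (1 - b) / (L * (MV + (1 + b) ^ 2))) :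
    (∫ ω, f (x - γ • gtilde ω))
      ≤ f x - γ * (1 - b) / 2 * ‖gf x‖ ^ 2 + γ ^ 2 * L / 2 * V := by
  have hinner : Integrable (fun ω => ⟪gf x, gtilde ω⟫) := hint.const_inner (gf x)
  have hRHSint : Integrable (fun ω =>
      f x + (-γ) * ⟪gf x, gtilde ω⟫ + L / 2 * γ ^ 2 * ‖gtilde ω‖ ^ 2) :=
    ((integrable_const _).add (hinner.const_mul _)).add (hsq.const_mul _)
  have hpt : ∀ ω, f (x - γ • gtilde ω)
      ≤ f x + (-γ) * ⟪gf x, gtilde ω⟫ + L / 2 * γ ^ 2 * ‖gtilde ω‖ ^ 2 := by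
    intro ω
    have h := hsmooth x (x - γ • gtilde ω)
    have e1 : x - γ • gtilde ω - x = -(γ • gtilde ω) := by abel
    rw [e1] at h
    rw [inner_neg_right, inner_smul_right, norm_neg, norm_smul] at h
    calc f (x - γ • gtilde ω) ≤ _ := h
      _ = f x + (-γ) * ⟪gf x, gtilde ω⟫ + L / 2 * γ ^ 2 * ‖gtilde ω‖ ^ 2 := by
          simp [Real.norm_eq_abs, mul_pow, sq_abs]; ring
  have hle : (∫ ω, f (x - γ • gtilde ω))
      ≤ ∫ ω, (f x + (-γ) * ⟪gf x, gtilde ω⟫ + L / 2 * γ ^ 2 * ‖gtilde ω‖ ^ 2) :=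
    integral_mono hfint hRHSint hpt
  have e1 : (∫ ω, (f x + (-γ) * ⟪gf x, gtilde ω⟫ + L / 2 * γ ^ 2 * ‖gtilde ω‖ ^ 2))
      = (∫ ω, (f x + (-γ) * ⟪gf x, gtilde ω⟫)) + ∫ ω, L / 2 * γ ^ 2 * ‖gtilde ω‖ ^ 2 :=
    integral_add ((integrable_const _).add (hinner.const_mul _)) (hsq.const_mul _)
  have e2 : (∫ ω, (f x + (-γ) * ⟪gf x, gtilde ω⟫))
      = (∫ _ : Ω, f x) + ∫ ω, (-γ) * ⟪gf x, gtilde ω⟫ :=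
    integral_add (integrable_const _) (hinner.const_mul _)
  have e3 : (∫ _ : Ω, f x) = f x := by simp
  rw [e1, e2, e3, integral_const_mul, integral_const_mul, integral_inner hint] at hle
  have hpos : 0 < MV + (1 + b) ^ 2 := by nlinarith
  have hγL : γ * (L * (MV + (1 + b) ^ 2)) ≤ 1 - b := by
    rw [← le_div_iff₀ (by positivity)] ; exact hγ
  have h2 : L / 2 * γ ^ 2 * (∫ ω, ‖gtilde ω‖ ^ 2)
      ≤ L / 2 * γ ^ 2 * ((MV + (1 + b) ^ 2) * ‖gf x‖ ^ 2 + V) := by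
    apply mul_le_mul_of_nonneg_left hsecond (by positivity)
  have h1 : (-γ) * ⟪gf x, ∫ ω, gtilde ω⟫ ≤ (-γ) * ((1 - b) * ‖gf x‖ ^ 2) := by
    apply mul_le_mul_of_nonpos_left hfirst (by linarith)
  have hn : 0 ≤ ‖gf x‖ ^ 2 := sq_nonneg _
  nlinarith [sq_nonneg γ, mul_le_mul_of_nonneg_right hγL hn, hle, h1, h2,
    mul_pos hγ0 hγ0]
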